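/- In the weighted urn process on R, for an order ideal I with ∅ ∈ I, R ∉ I, let exit_R(I) be the first set in the process not belonging to I. Then for any i ∈ R, Pr(i ∈ exit_R(I)) = ∑_{X ∈ I, i ∉ X} w(i)·Pr_R(X)/w(∁X). -/

import Mathlib

open Finset

variable {ι : Type*} [DecidableEq ι]

/-- The probability that the urn process draws the balls in the order given by
the list `l`: at each step, each remaining ball is drawn with probability
proportional to its weight. -/
noncomputable def listProb (w : ι → ℝ) : List ι → ℝ
  | [] => 1
  | i :: l => w i / ((i :: l).map w).sum * listProb w l

/-- `urnPr w R X` is the probability that at some point of the urn process on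
the weighted set `(R, w)` the set of drawn balls is exactly `X`. -/
noncomputable def urnPr (w : ι → ℝ) (R X : Finset ι) : ℝ :=
  ∑ l ∈ R.toList.permutations.toFinset,
    if (l.take X.card).toFinset = X then listProb w l else 0

/-- `exitProb w R I i` is the probability that ball `i` belongs to
`exit_R(I)`, i.e. that `i` is drawn at a moment when the set of already drawn
balls belongs to the ideal `I`. -/
noncomputable def exitProb (w : ι → ℝ) (R : Finset ι) (I : Finset (Finset ι)) (i : ι) : ℝ :=
  ∑ l ∈ R.toList.permutations.toFinset,
    if (l.take (l.idxOf i)).toFinset ∈ I then listProb w l else 0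

/-! ### Auxiliary machinery -/

noncomputable def perms (S : Finset ι) : Finset (List ι) := S.toList.permutations.toFinset

lemma mem_perms {S : Finset ι} {l : List ι} : l ∈ perms S ↔ l.Nodup ∧ l.toFinset = S := by
  simp only [perms, List.mem_toFinset, List.mem_permutations]
  constructor
  · intro h
    exact ⟨h.nodup_iff.mpr S.nodup_toList, by ext a; simp [h.mem_iff]⟩
  · rintro ⟨h1, h2⟩
    exact List.perm_of_nodup_nodup_toFinset_eq h1 S.nodup_toList
      (by rw [h2, Finset.toList_toFinset])

lemma head_decomp (S : Finset ι) {j : ι} (hj : j ∈ S) (G : List ι → ℝ) :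
    ∑ s ∈ perms S, (if s.head? = some j then G s else 0)
      = ∑ t ∈ perms (S.erase j), G (j :: t) := by
  rw [← Finset.sum_filter]
  refine Finset.sum_nbij' List.tail (j :: ·) ?_ ?_ ?_ ?_ ?_
  · intro s hs
    simp only [Finset.mem_filter, mem_perms] at hs
    obtain ⟨⟨hn, ht⟩, hh⟩ := hs
    cases s with
    | nil => simp at hh
    | cons a t =>
      simp only [List.head?_cons, Option.some.injEq] at hh
      subst hh
      rw [List.nodup_cons] at hn
      rw [List.toFinset_cons] at ht
      simp only [List.tail_cons, mem_perms]
      exact ⟨hn.2, by rw [← ht, Finset.erase_insert (by simpa using hn.1)]⟩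
  · intro t ht
    rw [mem_perms] at ht
    simp only [Finset.mem_filter, mem_perms, List.head?_cons, and_true,
      List.nodup_cons, List.toFinset_cons]
    have hjt : j ∉ t := fun h => (Finset.notMem_erase j S) (ht.2 ▸ List.mem_toFinset.mpr h)
    exact ⟨⟨hjt, ht.1⟩, by rw [ht.2, Finset.insert_erase hj]⟩
  · intro s hs
    simp only [Finset.mem_filter] at hs
    cases s with
    | nil => simp at hs
    | cons a t =>
      simp only [List.head?_cons, Option.some.injEq] at hs
      rw [hs.2]
      rfl
  · intro t _; rfl
  · intro s hs
    simp only [Finset.mem_filter] at hs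
    cases s with
    | nil => simp at hs
    | cons a t =>
      simp only [List.head?_cons, Option.some.injEq] at hs
      rw [hs.2]
      rfl

lemma sum_listProb (w : ι → ℝ) (S : Finset ι) (hw : ∀ j ∈ S, 0 < w j) :
    ∑ l ∈ perms S, listProb w l = 1 := by
  induction S using Finset.strongInduction with
  | _ S ih =>
    rcases S.eq_empty_or_nonempty with rfl | hS
    · simp [perms, listProb]
    · have hW : (0:ℝ) < ∑ j ∈ S, w j := Finset.sum_pos hw hS
      have step : ∀ l ∈ perms S, listProb w l
          = ∑ j ∈ S, (if l.head? = some j then listProb w l else 0) := by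
        intro l hl
        rw [mem_perms] at hl
        cases l with
        | nil => exact absurd hl.2.symm (by simpa using hS.ne_empty)
        | cons a t =>
          have ha : a ∈ S := by rw [← hl.2]; simp
          simp only [List.head?_cons, Option.some.injEq]
          rw [Finset.sum_ite_eq S a (fun _ => listProb w (a :: t)), if_pos ha]
      rw [Finset.sum_congr rfl step, Finset.sum_comm]
      have key : ∀ j ∈ S,
          ∑ l ∈ perms S, (if l.head? = some j then listProb w l else 0)
            = w j / ∑ k ∈ S, w k := by
        intro j hj
        rw [head_decomp S hj]
        have : ∀ t ∈ perms (S.erase j), listProb w (j :: t)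
            = (w j / ∑ k ∈ S, w k) * listProb w t := by
          intro t ht
          rw [mem_perms] at ht
          have : ((j :: t).map w).sum = ∑ k ∈ S, w k := by
            rw [← List.sum_toFinset w (by
              exact List.nodup_cons.mpr ⟨fun h => (Finset.notMem_erase j S)
                (ht.2 ▸ List.mem_toFinset.mpr h), ht.1⟩)]
            congr 1
            rw [List.toFinset_cons, ht.2, Finset.insert_erase hj]
          rw [listProb, this]
        rw [Finset.sum_congr rfl this, ← Finset.mul_sum,
          ih (S.erase j) (Finset.erase_ssubset hj) (fun k hk => hw k (Finset.mem_of_mem_erase hk)),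
          mul_one]
      rw [Finset.sum_congr rfl key, ← Finset.sum_div, div_self hW.ne']

noncomputable def prefProb (w : ι → ℝ) (c : ℝ) : List ι → ℝ
  | [] => 1
  | i :: l => w i / (((i :: l).map w).sum + c) * prefProb w c l

lemma listProb_append (w : ι → ℝ) (p s : List ι) :
    listProb w (p ++ s) = prefProb w ((s.map w).sum) p * listProb w s := by
  induction p with
  | nil => simp [prefProb]
  | cons a t ih =>
    rw [List.cons_append, listProb, ih, prefProb]
    have h : ((a :: (t ++ s)).map w).sum = ((a :: t).map w).sum + (s.map w).sum := by
      simp [add_assoc]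
    rw [h]; ring

lemma sum_split (w : ι → ℝ) (R X : Finset ι) (hXR : X ⊆ R) (F : List ι → ℝ) :
    ∑ l ∈ perms R, (if (l.take X.card).toFinset = X then F l else 0)
      = ∑ p ∈ perms X, ∑ s ∈ perms (R \ X), F (p ++ s) := by
  rw [← Finset.sum_filter, ← Finset.sum_product']
  refine Finset.sum_nbij' (fun l => (l.take X.card, l.drop X.card))
    (fun q => q.1 ++ q.2) ?_ ?_ ?_ ?_ ?_
  · intro l hl
    simp only [Finset.mem_filter, mem_perms] at hl
    obtain ⟨⟨hn, hR⟩, hX⟩ := hl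
    have hdisj : ∀ a, a ∈ l.take X.card → a ∈ l.drop X.card → False := by
      have := hn
      rw [← List.take_append_drop X.card l, List.nodup_append] at this
      exact fun a h1 h2 => this.2.2 a h1 a h2 rfl
    have hmem : ∀ a, a ∈ l ↔ (a ∈ l.take X.card ∨ a ∈ l.drop X.card) := by
      intro a
      conv_lhs => rw [← List.take_append_drop X.card l]
      exact List.mem_append
    simp only [Finset.mem_product, mem_perms]
    refine ⟨⟨hn.sublist (List.take_sublist _ _), hX⟩,
      hn.sublist (List.drop_sublist _ _), ?_⟩
    ext a
    constructor
    · intro h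
      have h' : a ∈ l.drop X.card := List.mem_toFinset.mp h
      refine Finset.mem_sdiff.mpr ⟨?_, ?_⟩
      · rw [← hR]; exact List.mem_toFinset.mpr ((hmem a).mpr (Or.inr h'))
      · intro hX'
        rw [← hX] at hX'
        exact hdisj a (List.mem_toFinset.mp hX') h'
    · intro h
      obtain ⟨h1, h2⟩ := Finset.mem_sdiff.mp h
      rw [← hR] at h1
      rcases (hmem a).mp (List.mem_toFinset.mp h1) with h | h
      · exact absurd (by rw [← hX]; exact List.mem_toFinset.mpr h) h2
      · exact List.mem_toFinset.mpr h
  · rintro ⟨p, s⟩ hq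
    simp only [Finset.mem_product, mem_perms] at hq
    obtain ⟨⟨hpn, hpX⟩, hsn, hsX⟩ := hq
    have hdisj : p.Disjoint s := by
      intro a hap has
      have h1 : a ∈ X := hpX ▸ List.mem_toFinset.mpr hap
      have h2 : a ∈ R \ X := hsX ▸ List.mem_toFinset.mpr has
      exact (Finset.mem_sdiff.mp h2).2 h1
    have hplen : p.length = X.card := by
      rw [← hpX, List.toFinset_card_of_nodup hpn]
    simp only [Finset.mem_filter, mem_perms]
    refine ⟨⟨hpn.append hsn hdisj, ?_⟩, ?_⟩
    · rw [List.toFinset_append, hpX, hsX, Finset.union_sdiff_of_subset hXR]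
    · rw [← hplen, List.take_left, hpX]
  · intro l hl
    exact List.take_append_drop _ l
  · rintro ⟨p, s⟩ hq
    simp only [Finset.mem_product, mem_perms] at hq
    have hplen : p.length = X.card := by
      rw [← hq.1.2, List.toFinset_card_of_nodup hq.1.1]
    simp only [← hplen, List.take_left, List.drop_left]
  · intro l hl
    rw [List.take_append_drop]

lemma urnPr_closed (w : ι → ℝ) (R X : Finset ι) (hw : ∀ j ∈ R, 0 < w j) (hXR : X ⊆ R) :
    urnPr w R X = ∑ p ∈ perms X, prefProb w (∑ j ∈ R \ X, w j) p := by
  have h0 : urnPr w R X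
      = ∑ l ∈ perms R, (if (l.take X.card).toFinset = X then listProb w l else 0) := rfl
  rw [h0, sum_split w R X hXR]
  refine Finset.sum_congr rfl fun p hp => ?_
  have key : ∀ s ∈ perms (R \ X), listProb w (p ++ s)
      = prefProb w (∑ j ∈ R \ X, w j) p * listProb w s := by
    intro s hs
    rw [mem_perms] at hs
    rw [listProb_append, ← List.sum_toFinset w hs.1, hs.2]
  rw [Finset.sum_congr rfl key, ← Finset.mul_sum,
    sum_listProb w (R \ X) (fun j hj => hw j (Finset.mem_sdiff.mp hj).1), mul_one]

lemma numer_closed (w : ι → ℝ) (R X : Finset ι) (hw : ∀ j ∈ R, 0 < w j) (hXR : X ⊆ R)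
    {i : ι} (hiR : i ∈ R) (hiX : i ∉ X) :
    ∑ l ∈ perms R, (if (l.take X.card).toFinset = X ∧ l[X.card]? = some i
        then listProb w l else 0)
      = w i / (∑ j ∈ R \ X, w j) * ∑ p ∈ perms X, prefProb w (∑ j ∈ R \ X, w j) p := by
  set c : ℝ := ∑ j ∈ R \ X, w j with hc
  have hiRX : i ∈ R \ X := Finset.mem_sdiff.mpr ⟨hiR, hiX⟩
  have hrw : ∀ l ∈ perms R,
      (if (l.take X.card).toFinset = X ∧ l[X.card]? = some i then listProb w l else 0)
      = if (l.take X.card).toFinset = X then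
          (if l[X.card]? = some i then listProb w l else 0) else 0 := by
    intro l _
    by_cases h1 : (l.take X.card).toFinset = X <;>
      by_cases h2 : l[X.card]? = some i <;> simp [h1, h2]
  rw [Finset.sum_congr rfl hrw,
    sum_split w R X hXR (fun l => if l[X.card]? = some i then listProb w l else 0)]
  have inner : ∀ p ∈ perms X,
      (∑ s ∈ perms (R \ X), if (p ++ s)[X.card]? = some i then listProb w (p ++ s) else 0)
        = prefProb w c p * (w i / c) := by
    intro p hp
    rw [mem_perms] at hp
    have hplen : p.length = X.card := by
      rw [← hp.2, List.toFinset_card_of_nodup hp.1]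
    have hcond : ∀ s : List ι, (p ++ s)[X.card]? = s.head? := by
      intro s
      rw [← hplen, List.getElem?_append_right le_rfl, Nat.sub_self, ← List.head?_eq_getElem?]
    simp_rw [hcond]
    rw [head_decomp (R \ X) hiRX (fun s => listProb w (p ++ s))]
    have key : ∀ t ∈ perms ((R \ X).erase i), listProb w (p ++ i :: t)
        = prefProb w c p * (w i / c) * listProb w t := by
      intro t ht
      rw [mem_perms] at ht
      have hit : i ∉ t := fun h =>
        (Finset.notMem_erase i (R \ X)) (ht.2 ▸ List.mem_toFinset.mpr h)
      have hsum : ((i :: t).map w).sum = c := by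
        rw [← List.sum_toFinset w (List.nodup_cons.mpr ⟨hit, ht.1⟩), List.toFinset_cons,
          ht.2, Finset.insert_erase hiRX]
      rw [listProb_append, hsum, listProb, hsum]
      ring
    rw [Finset.sum_congr rfl key, ← Finset.mul_sum,
      sum_listProb w ((R \ X).erase i)
        (fun j hj => hw j (Finset.mem_sdiff.mp (Finset.mem_of_mem_erase hj)).1), mul_one]
  rw [Finset.sum_congr rfl inner, ← Finset.sum_mul, mul_comm]

lemma not_mem_take_indexOf (l : List ι) (i : ι) : i ∉ l.take (l.idxOf i) := by
  induction l with
  | nil => simp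
  | cons a t ih =>
    by_cases h : i = a
    · subst h; simp [List.idxOf_cons_self]
    · rw [List.idxOf_cons_ne _ (fun e => h e.symm), List.take_succ_cons]
      intro hmem
      rcases List.mem_cons.mp hmem with h' | h'
      · exact h h'
      · exact ih h'

lemma take_indexOf_iff {l : List ι} (hn : l.Nodup) {i : ι} (hil : i ∈ l) (X : Finset ι) :
    (l.take (l.idxOf i)).toFinset = X ↔
      ((l.take X.card).toFinset = X ∧ l[X.card]? = some i) := by
  have hk : l.idxOf i < l.length := List.idxOf_lt_length_iff.mpr hil
  constructor
  · intro h
    have hcard : X.card = l.idxOf i := by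
      rw [← h, List.toFinset_card_of_nodup (hn.sublist (List.take_sublist _ _)),
        List.length_take, min_eq_left hk.le]
    refine ⟨by rw [hcard]; exact h, ?_⟩
    rw [hcard, List.getElem?_eq_getElem hk, List.getElem_idxOf]
  · rintro ⟨h1, h2⟩
    have hXlen : X.card < l.length := by
      by_contra hh
      push_neg at hh
      rw [List.getElem?_eq_none_iff.mpr hh] at h2
      exact Option.noConfusion rfl (heq_of_eq h2)
    have hgetX : l.get ⟨X.card, hXlen⟩ = i := by
      rw [List.getElem?_eq_getElem hXlen] at h2
      exact Option.some.inj h2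
    have heq : l.idxOf i = X.card := by
      have h3 : l.get ⟨l.idxOf i, hk⟩ = l.get ⟨X.card, hXlen⟩ := by
        simp only [List.get_eq_getElem] at hgetX ⊢; rw [List.getElem_idxOf, hgetX]
      have h4 := (List.Nodup.get_inj_iff hn).mp h3
      exact congrArg Fin.val h4
    rw [heq]
    exact h1

theorem exitProb_eq_sum
    (w : ι → ℝ) (R : Finset ι) (hw : ∀ i ∈ R, 0 < w i)
    (I : Finset (Finset ι)) (hIsub : ∀ X ∈ I, X ⊆ R)
    (hIdeal : ∀ X ∈ I, ∀ Y, Y ⊆ X → Y ∈ I)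
    (hbot : ∅ ∈ I) (htop : R ∉ I) (i : ι) (hi : i ∈ R) :
    exitProb w R I i =
      ∑ X ∈ I.filter (fun X => i ∉ X), w i * urnPr w R X / ∑ j ∈ R \ X, w j := by
  classical
  set J := I.filter (fun X => i ∉ X) with hJ
  have hPR : exitProb w R I i
      = ∑ l ∈ perms R, (if (l.take (l.idxOf i)).toFinset ∈ I then listProb w l else 0) := rfl
  have step1 : ∀ l ∈ perms R,
      (if (l.take (l.idxOf i)).toFinset ∈ I then listProb w l else 0)
      = ∑ X ∈ J, (if (l.take (l.idxOf i)).toFinset = X then listProb w l else 0) := by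
    intro l _
    rw [Finset.sum_ite_eq J ((l.take (l.idxOf i)).toFinset) (fun _ => listProb w l)]
    have hmemiff : (l.take (l.idxOf i)).toFinset ∈ J ↔ (l.take (l.idxOf i)).toFinset ∈ I := by
      simp only [hJ, Finset.mem_filter, List.mem_toFinset, and_iff_left_iff_imp]
      exact fun _ => not_mem_take_indexOf l i
    rw [if_congr hmemiff rfl rfl]
  rw [hPR, Finset.sum_congr rfl step1, Finset.sum_comm]
  refine Finset.sum_congr rfl fun X hX => ?_
  have hXI : X ∈ I := (Finset.mem_filter.mp hX).1
  have hiX : i ∉ X := (Finset.mem_filter.mp hX).2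
  have hXR : X ⊆ R := hIsub X hXI
  have step2 : ∀ l ∈ perms R,
      (if (l.take (l.idxOf i)).toFinset = X then listProb w l else 0)
      = (if (l.take X.card).toFinset = X ∧ l[X.card]? = some i then listProb w l else 0) := by
    intro l hl
    rw [mem_perms] at hl
    have hil : i ∈ l := by
      rw [← List.mem_toFinset, hl.2]; exact hi
    rw [if_congr (take_indexOf_iff hl.1 hil X) rfl rfl]
  rw [Finset.sum_congr rfl step2, numer_closed w R X hw hXR hi hiX,
    urnPr_closed w R X hw hXR]
  ring
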